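/- Let f₀, f be nonnegative functions in L¹(ℝ⁶) with ∫∫ f dv dx = ∫∫ f₀ dv dx = M, with finite kinetic energies, finite Casimir integrals, and with ρ_f, ρ_{f₀} having finite Coulomb energies. Let U₀(x) := −∫ ρ_{f₀}(y)/|x−y| dy, E(x,v) := ½|v|² + U₀(x), let E₀ ∈ ℝ be arbitrary, and suppose all the integrals below are absolutely convergent. Then the following identity holds: ℋ_C(f) − ℋ_C(f₀) = d(f,f₀) − ½ ∫∫ (ρ_f − ρ_{f₀})(x) (ρ_f − ρ_{f₀})(y) / |x−y| dx dy, where d(f,f₀) := ∫∫ [ Q(f(x,v),P(x,v)) − Q(f₀(x,v),P(x,v)) + (E(x,v) − E₀)(f − f₀)(x,v) ] dv dx. (The subtracted double integral equals (1/8π)‖∇U_f − ∇U_{f₀}‖₂², where U_f := −ρ_f ∗ 1/|·|.) -/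
import Mathlib


open MeasureTheory Real Filter Topology

noncomputable section

abbrev E3 := EuclideanSpace ℝ (Fin 3)

def e3 (a b c : ℝ) : E3 := (WithLp.equiv 2 (Fin 3 → ℝ)).symm ![a, b, c]

/-- third component of the angular momentum, P(x,v) = x₁v₂ − x₂v₁ -/
def angmom (z : E3 × E3) : ℝ := z.1 0 * z.2 1 - z.1 1 * z.2 0

/-- induced spatial density ρ_f -/
def rho (f : E3 × E3 → ℝ) (x : E3) : ℝ := ∫ v : E3, f (x, v)

/-- kinetic energy -/
def Ekin (f : E3 × E3 → ℝ) : ℝ := (1/2) * ∫ z : E3 × E3, ‖z.2‖^2 * f z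

/-- potential energy -/
def Epot (f : E3 × E3 → ℝ) : ℝ :=
  -(1/2) * ∫ x : E3, ∫ y : E3, rho f x * rho f y / ‖x - y‖

/-- Casimir functional 𝒞 -/
def Casimir (Q : ℝ → ℝ → ℝ) (f : E3 × E3 → ℝ) : ℝ :=
  ∫ z : E3 × E3, Q (f z) (angmom z)

/-- energy-Casimir functional ℋ_C -/
def HC (Q : ℝ → ℝ → ℝ) (f : E3 × E3 → ℝ) : ℝ := Ekin f + Epot f + Casimir Q f

/-- rotation about the x₃-axis by angle θ -/
def rotZ (θ : ℝ) (x : E3) : E3 :=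
  e3 (Real.cos θ * x 0 - Real.sin θ * x 1) (Real.sin θ * x 0 + Real.cos θ * x 1) (x 2)

/-- axial symmetry: invariance under all rotations about the x₃-axis -/
def AxiSym (f : E3 × E3 → ℝ) : Prop :=
  ∀ (θ : ℝ) (z : E3 × E3), f (rotZ θ z.1, rotZ θ z.2) = f z

/-- membership in the constraint set ℱ_M -/
def MemFM (Q : ℝ → ℝ → ℝ) (M : ℝ) (f : E3 × E3 → ℝ) : Prop :=
  Integrable f ∧ (∀ z, 0 ≤ f z) ∧ (∫ z : E3 × E3, f z) = M ∧
    Integrable (fun z : E3 × E3 => ‖z.2‖^2 * f z) ∧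
    Integrable (fun z : E3 × E3 => Q (f z) (angmom z))

/-- membership in the axially symmetric constraint set ℱ_M^S -/
def MemFMS (Q : ℝ → ℝ → ℝ) (M : ℝ) (f : E3 × E3 → ℝ) : Prop :=
  MemFM Q M f ∧ AxiSym f

/-- h_M = inf of ℋ_C over ℱ_M -/
def hInf (Q : ℝ → ℝ → ℝ) (M : ℝ) : ℝ := sInf (HC Q '' {f | MemFM Q M f})

/-- h_M^S = inf of ℋ_C over ℱ_M^S -/
def hInfS (Q : ℝ → ℝ → ℝ) (M : ℝ) : ℝ := sInf (HC Q '' {f | MemFMS Q M f})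

/-- induced gravitational potential U₀ of a state f₀ -/
def U0 (f0 : E3 × E3 → ℝ) (x : E3) : ℝ := -∫ y : E3, rho f0 y / ‖x - y‖

/-- particle energy E(x,v) = ½|v|² + U₀(x) -/
def Eng (f0 : E3 × E3 → ℝ) (z : E3 × E3) : ℝ := (1/2) * ‖z.2‖^2 + U0 f0 z.1

/-- φ(s,P) = (∂_f Q(·,P))⁻¹(s) for s ≥ 0, and 0 for s < 0 -/
def phi (Qf : ℝ → ℝ → ℝ) (s P : ℝ) : ℝ :=
  if 0 ≤ s then Function.invFunOn (fun t => Qf t P) (Set.Ici 0) s else 0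


section Aux

open Filter

/-- ∫ U₀ f = −∬ ρ_f ρ_{f₀} / r  -/
lemma ec_pot_aux (f f0 : E3 × E3 → ℝ)
    (hUf : Integrable (fun z : E3 × E3 => U0 f0 z.1 * f z)) :
    ∫ z : E3 × E3, U0 f0 z.1 * f z
      = -∫ x : E3, ∫ y : E3, rho f x * rho f0 y / ‖x - y‖ := by
  rw [Measure.volume_eq_prod] at hUf
  have h1 : ∫ z : E3 × E3, U0 f0 z.1 * f z = ∫ x : E3, ∫ v : E3, U0 f0 x * f (x, v) := by
    rw [Measure.volume_eq_prod]
    exact integral_prod _ hUf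
  rw [h1, ← integral_neg]
  congr 1; funext x
  rw [integral_const_mul]
  show U0 f0 x * rho f x = _
  rw [U0, neg_mul, mul_comm, ← integral_const_mul]
  rw [show (∫ y : E3, rho f x * (rho f0 y / ‖x - y‖)) = ∫ y : E3, rho f x * rho f0 y / ‖x - y‖
    from by congr 1; funext y; rw [mul_div_assoc]]

/-- symmetry of the Coulomb pairing -/
lemma ec_swap_aux (f f0 : E3 × E3 → ℝ)
    (h : Integrable (fun p : E3 × E3 => rho f p.1 * rho f0 p.2 / ‖p.1 - p.2‖)) :
    ∫ x : E3, ∫ y : E3, rho f x * rho f0 y / ‖x - y‖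
      = ∫ x : E3, ∫ y : E3, rho f0 x * rho f y / ‖x - y‖ := by
  rw [Measure.volume_eq_prod] at h
  rw [integral_integral_swap (f := fun x y => rho f x * rho f0 y / ‖x - y‖) h]
  congr 1; funext a; congr 1; funext b
  rw [norm_sub_rev]; ring_nf

end Aux

/-- The energy-Casimir identity: ℋ_C(f) − ℋ_C(f₀) = d(f,f₀) − ½∬(ρ_f−ρ_{f₀})(x)(ρ_f−ρ_{f₀})(y)/|x−y|,
where d(f,f₀) = ∫∫ [Q(f,P) − Q(f₀,P) + (E − E₀)(f − f₀)]. -/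
theorem stmt16 (Q : ℝ → ℝ → ℝ) (M E0 : ℝ) (f f0 : E3 × E3 → ℝ)
    (hf : Integrable f) (hf0 : Integrable f0)
    (hnn : ∀ z, 0 ≤ f z) (hnn0 : ∀ z, 0 ≤ f0 z)
    (hmass : (∫ z : E3 × E3, f z) = M) (hmass0 : (∫ z : E3 × E3, f0 z) = M)
    (hkin : Integrable (fun z : E3 × E3 => ‖z.2‖^2 * f z))
    (hkin0 : Integrable (fun z : E3 × E3 => ‖z.2‖^2 * f0 z))
    (hcas : Integrable (fun z : E3 × E3 => Q (f z) (angmom z)))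
    (hcas0 : Integrable (fun z : E3 × E3 => Q (f0 z) (angmom z)))
    (hcoul : Integrable (fun p : E3 × E3 => rho f p.1 * rho f p.2 / ‖p.1 - p.2‖))
    (hcoul0 : Integrable (fun p : E3 × E3 => rho f0 p.1 * rho f0 p.2 / ‖p.1 - p.2‖))
    (hcoulx : Integrable (fun p : E3 × E3 => rho f p.1 * rho f0 p.2 / ‖p.1 - p.2‖))
    (hUf : Integrable (fun z : E3 × E3 => U0 f0 z.1 * f z))
    (hUf0 : Integrable (fun z : E3 × E3 => U0 f0 z.1 * f0 z))
    (hd : Integrable (fun z : E3 × E3 =>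
      Q (f z) (angmom z) - Q (f0 z) (angmom z) + (Eng f0 z - E0) * (f z - f0 z))) :
    HC Q f - HC Q f0 =
      (∫ z : E3 × E3,
        (Q (f z) (angmom z) - Q (f0 z) (angmom z) + (Eng f0 z - E0) * (f z - f0 z)))
      - (1/2) * ∫ x : E3, ∫ y : E3,
          (rho f x - rho f0 x) * (rho f y - rho f0 y) / ‖x - y‖ := by
  classical
  set Kf := ∫ z : E3 × E3, ‖z.2‖^2 * f z with hKfdef
  set Kf0 := ∫ z : E3 × E3, ‖z.2‖^2 * f0 z with hKf0def
  set Cf := ∫ z : E3 × E3, Q (f z) (angmom z) with hCfdef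
  set Cf0 := ∫ z : E3 × E3, Q (f0 z) (angmom z) with hCf0def
  set A := ∫ x : E3, ∫ y : E3, rho f x * rho f y / ‖x - y‖ with hAdef
  set B := ∫ x : E3, ∫ y : E3, rho f0 x * rho f0 y / ‖x - y‖ with hBdef
  set X := ∫ x : E3, ∫ y : E3, rho f x * rho f0 y / ‖x - y‖ with hXdef
  -- the swapped Coulomb mixed term
  have hswap : Integrable (fun p : E3 × E3 => rho f0 p.1 * rho f p.2 / ‖p.1 - p.2‖) := by
    rw [Measure.volume_eq_prod] at hcoulx ⊢
    refine hcoulx.swap.congr (Filter.Eventually.of_forall fun p => ?_)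
    show rho f p.2 * rho f0 p.1 / ‖p.2 - p.1‖ = _
    rw [norm_sub_rev]; ring_nf
  have hX' : ∫ x : E3, ∫ y : E3, rho f0 x * rho f y / ‖x - y‖ = X := by
    rw [hXdef]; exact (ec_swap_aux f f0 hcoulx).symm
  have hIf : ∫ z : E3 × E3, U0 f0 z.1 * f z = -X := by
    rw [hXdef]; exact ec_pot_aux f f0 hUf
  have hIf0 : ∫ z : E3 × E3, U0 f0 z.1 * f0 z = -B := by
    rw [hBdef]; exact ec_pot_aux f0 f0 hUf0
  -- splitting the d-integral
  have hQsub : Integrable (fun z : E3 × E3 =>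
      Q (f z) (angmom z) - Q (f0 z) (angmom z)) := hcas.sub hcas0
  have hg : Integrable (fun z : E3 × E3 => (Eng f0 z - E0) * (f z - f0 z)) := by
    refine (hd.sub hQsub).congr (Filter.Eventually.of_forall fun z => ?_)
    simp only [Pi.sub_apply]; ring
  have hk2 : Integrable (fun z : E3 × E3 => (1/2 : ℝ) * (‖z.2‖^2 * f z)) := by
    exact hkin.const_mul _
  have hk2' : Integrable (fun z : E3 × E3 => (1/2 : ℝ) * (‖z.2‖^2 * f0 z)) := by
    exact hkin0.const_mul _
  have hE0f : Integrable (fun z : E3 × E3 => E0 * f z) := hf.const_mul _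
  have hE0f' : Integrable (fun z : E3 × E3 => E0 * f0 z) := hf0.const_mul _
  have hsum1 : Integrable (fun z : E3 × E3 =>
      (1/2 : ℝ) * (‖z.2‖^2 * f z) + U0 f0 z.1 * f z) := hk2.add hUf
  have hsum2 : Integrable (fun z : E3 × E3 =>
      (1/2 : ℝ) * (‖z.2‖^2 * f0 z) + U0 f0 z.1 * f0 z) := hk2'.add hUf0
  have hh1 : Integrable (fun z : E3 × E3 => (Eng f0 z - E0) * f z) := by
    refine (hsum1.sub hE0f).congr (Filter.Eventually.of_forall fun z => ?_)
    simp only [Pi.sub_apply, Pi.add_apply, Eng]; ring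
  have hh2 : Integrable (fun z : E3 × E3 => (Eng f0 z - E0) * f0 z) := by
    refine (hsum2.sub hE0f').congr (Filter.Eventually.of_forall fun z => ?_)
    simp only [Pi.sub_apply, Pi.add_apply, Eng]; ring
  have hI1 : ∫ z : E3 × E3, (Eng f0 z - E0) * f z = (1/2) * Kf + (-X) - E0 * M := by
    have e1 : ∫ z : E3 × E3, (Eng f0 z - E0) * f z
        = ∫ z : E3 × E3, ((1/2) * (‖z.2‖^2 * f z) + U0 f0 z.1 * f z - E0 * f z) := by
      congr 1; funext z; simp only [Eng]; ring
    rw [e1, integral_sub hsum1 hE0f, integral_add hk2 hUf, integral_const_mul,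
      integral_const_mul, hmass, hIf, ← hKfdef]
  have hI2 : ∫ z : E3 × E3, (Eng f0 z - E0) * f0 z = (1/2) * Kf0 + (-B) - E0 * M := by
    have e1 : ∫ z : E3 × E3, (Eng f0 z - E0) * f0 z
        = ∫ z : E3 × E3, ((1/2) * (‖z.2‖^2 * f0 z) + U0 f0 z.1 * f0 z - E0 * f0 z) := by
      congr 1; funext z; simp only [Eng]; ring
    rw [e1, integral_sub hsum2 hE0f', integral_add hk2' hUf0, integral_const_mul,
      integral_const_mul, hmass0, hIf0, ← hKf0def]
  have hD : ∫ z : E3 × E3,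
      (Q (f z) (angmom z) - Q (f0 z) (angmom z) + (Eng f0 z - E0) * (f z - f0 z))
      = (Cf - Cf0) + (((1/2) * Kf + (-X) - E0 * M) - ((1/2) * Kf0 + (-B) - E0 * M)) := by
    rw [integral_add hQsub hg, integral_sub hcas hcas0, ← hCfdef, ← hCf0def]
    congr 1
    have eg : ∫ z : E3 × E3, (Eng f0 z - E0) * (f z - f0 z)
        = ∫ z : E3 × E3, ((Eng f0 z - E0) * f z - (Eng f0 z - E0) * f0 z) := by
      congr 1; funext z; ring
    rw [eg, integral_sub hh1 hh2, hI1, hI2]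
  -- expanding the quadratic Coulomb term
  have hV : ∫ x : E3, ∫ y : E3, (rho f x - rho f0 x) * (rho f y - rho f0 y) / ‖x - y‖
      = A - X - X + B := by
    rw [Measure.volume_eq_prod] at hcoul hcoul0 hcoulx hswap
    have i1 : Integrable (fun p : E3 × E3 =>
        rho f p.1 * rho f p.2 / ‖p.1 - p.2‖ - rho f p.1 * rho f0 p.2 / ‖p.1 - p.2‖)
        ((volume : Measure E3).prod volume) := hcoul.sub hcoulx
    have i2 : Integrable (fun p : E3 × E3 =>
        rho f p.1 * rho f p.2 / ‖p.1 - p.2‖ - rho f p.1 * rho f0 p.2 / ‖p.1 - p.2‖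
          - rho f0 p.1 * rho f p.2 / ‖p.1 - p.2‖)
        ((volume : Measure E3).prod volume) := i1.sub hswap
    have e2 : (fun p : E3 × E3 =>
        (rho f p.1 - rho f0 p.1) * (rho f p.2 - rho f0 p.2) / ‖p.1 - p.2‖)
        = fun p : E3 × E3 => rho f p.1 * rho f p.2 / ‖p.1 - p.2‖
            - rho f p.1 * rho f0 p.2 / ‖p.1 - p.2‖ - rho f0 p.1 * rho f p.2 / ‖p.1 - p.2‖
            + rho f0 p.1 * rho f0 p.2 / ‖p.1 - p.2‖ := by
      funext p
      rw [show (rho f p.1 - rho f0 p.1) * (rho f p.2 - rho f0 p.2)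
          = rho f p.1 * rho f p.2 - rho f p.1 * rho f0 p.2 - rho f0 p.1 * rho f p.2
            + rho f0 p.1 * rho f0 p.2 from by ring, add_div, sub_div, sub_div]
    have hGdiff : Integrable
        (fun p : E3 × E3 => (rho f p.1 - rho f0 p.1) * (rho f p.2 - rho f0 p.2) / ‖p.1 - p.2‖)
        ((volume : Measure E3).prod volume) := by
      rw [e2]; exact i2.add hcoul0
    have e1 : ∫ x : E3, ∫ y : E3,
        (rho f x - rho f0 x) * (rho f y - rho f0 y) / ‖x - y‖
        = ∫ p : E3 × E3, (rho f p.1 - rho f0 p.1) * (rho f p.2 - rho f0 p.2) / ‖p.1 - p.2‖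
          ∂((volume : Measure E3).prod volume) := by
      exact (integral_prod _ hGdiff).symm
    have pA : ∫ p : E3 × E3, rho f p.1 * rho f p.2 / ‖p.1 - p.2‖
        ∂((volume : Measure E3).prod volume) = A := by
      rw [integral_prod _ hcoul]
    have pX : ∫ p : E3 × E3, rho f p.1 * rho f0 p.2 / ‖p.1 - p.2‖
        ∂((volume : Measure E3).prod volume) = X := by
      rw [integral_prod _ hcoulx]
    have pX' : ∫ p : E3 × E3, rho f0 p.1 * rho f p.2 / ‖p.1 - p.2‖
        ∂((volume : Measure E3).prod volume) = X := by
      rw [integral_prod _ hswap]; exact hX'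
    have pB : ∫ p : E3 × E3, rho f0 p.1 * rho f0 p.2 / ‖p.1 - p.2‖
        ∂((volume : Measure E3).prod volume) = B := by
      rw [integral_prod _ hcoul0]
    rw [e1, e2, integral_add i2 hcoul0, integral_sub i1 hswap, integral_sub hcoul hcoulx,
      pA, pX, pX', pB]
  rw [hD, hV]
  show Ekin f + Epot f + Casimir Q f - (Ekin f0 + Epot f0 + Casimir Q f0) = _
  rw [Ekin, Epot, Casimir, Ekin, Epot, Casimir, ← hKfdef, ← hKf0def, ← hCfdef, ← hCf0def,
    ← hAdef, ← hBdef]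
  ring
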